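/- The only positive integer solutions (k, n) of the equation F_1^2 + 2F_2^2 + 3F_3^2 + ... + kF_k^2 = F_n are (1,1), (1,2), and (2,4). -/

import Mathlib

open Finset Nat

set_option maxHeartbeats 1000000

lemma cassini (k : ℕ) :
    (Nat.fib (k+1) : ℤ)^2 - Nat.fib (k+1) * Nat.fib k - (Nat.fib k : ℤ)^2 = (-1)^k := by
  induction k with
  | zero => norm_num
  | succ k ih =>
      rw [Nat.fib_add_two]
      push_cast
      push_cast at ih
      rw [pow_succ]
      ring_nf
      ring_nf at ih
      linarith

lemma closed_form (k : ℕ) :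
    ((∑ j ∈ Finset.Icc 1 k, j * Nat.fib j ^ 2 : ℕ) : ℤ) =
      k * Nat.fib k * Nat.fib (k+1) - (Nat.fib k : ℤ)^2 + (if Odd k then 1 else 0) := by
  induction k with
  | zero => simp
  | succ k ih =>
      rw [Finset.sum_Icc_succ_top (by omega : 1 ≤ k + 1)]
      push_cast
      push_cast at ih
      rw [ih]
      have hc := cassini k
      rw [Nat.fib_add_two]
      push_cast
      rcases Nat.even_or_odd k with hk | hk
      · rw [if_neg (Nat.not_odd_iff_even.mpr hk),
          if_pos (Nat.odd_add_one.mpr (Nat.not_odd_iff_even.mpr hk))]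
        rw [hk.neg_one_pow] at hc
        ring_nf
        ring_nf at hc
        linarith
      · rw [if_pos hk, if_neg (fun hodd => (Nat.odd_add_one.mp hodd) hk)]
        rw [hk.neg_one_pow] at hc
        ring_nf
        ring_nf at hc
        linarith

lemma lt_fib_succ (k : ℕ) (hk : 5 ≤ k) : k < Nat.fib (k + 1) := by
  obtain ⟨m, rfl⟩ : ∃ m, k = m + 5 := ⟨k - 5, by omega⟩
  clear hk
  induction m with
  | zero => decide
  | succ m ih =>
      have ih' : m + 5 < Nat.fib (m + 6) := ih
      have h1 : 1 ≤ Nat.fib (m + 5) := Nat.fib_pos.mpr (by omega)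
      have h2 : Nat.fib (m + 7) = Nat.fib (m + 5) + Nat.fib (m + 6) := Nat.fib_add_two
      have : m + 6 < Nat.fib (m + 7) := by omega
      exact this

lemma main_case (K n : ℕ) (hK5 : 5 ≤ K)
    (h : (∑ j ∈ Finset.Icc 1 K, j * Nat.fib j ^ 2) = Nat.fib n) : False := by
  have ha5 : 5 ≤ Nat.fib K := by
    have h1 := Nat.fib_mono hK5
    have h2 : Nat.fib 5 = 5 := by decide
    omega
  have hab : Nat.fib K < Nat.fib (K + 1) := Nat.fib_lt_fib_succ (by omega)
  have hb2a : Nat.fib (K + 1) < 2 * Nat.fib K := by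
    have h1 : Nat.fib (K + 1) = Nat.fib (K - 1) + Nat.fib K := by
      rw [show K + 1 = (K - 1) + 2 by omega, Nat.fib_add_two, show K - 1 + 1 = K by omega]
    have h2 : Nat.fib (K - 1) < Nat.fib K :=
      (Nat.fib_lt_fib (show 2 ≤ K - 1 by omega) (n := K)).mpr (by omega)
    omega
  have hKb : K < Nat.fib (K + 1) := lt_fib_succ K hK5
  have hZa : (5:ℤ) ≤ (Nat.fib K : ℤ) := by exact_mod_cast ha5
  have hZab : (Nat.fib K : ℤ) < (Nat.fib (K+1) : ℤ) := by exact_mod_cast hab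
  have hZb2a : (Nat.fib (K+1) : ℤ) < 2 * (Nat.fib K : ℤ) := by exact_mod_cast hb2a
  have hZK : (5:ℤ) ≤ (K:ℤ) := by exact_mod_cast hK5
  have hb0 : (0:ℤ) < (Nat.fib (K+1) : ℤ) := by linarith
  have hABpos : (0:ℤ) < (Nat.fib K : ℤ) * (Nat.fib (K+1) : ℤ) :=
    mul_pos (by linarith) hb0
  have hZ := closed_form K
  rw [h] at hZ
  have h2K : (Nat.fib (2 * K) : ℤ) =
      (Nat.fib K : ℤ) * (2 * (Nat.fib (K+1) : ℤ) - Nat.fib K) := by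
    have hle : Nat.fib K ≤ 2 * Nat.fib (K + 1) := by omega
    rw [Nat.fib_two_mul, Nat.cast_mul, Nat.cast_sub hle]
    push_cast
    ring
  have h2K1 : (Nat.fib (2 * K + 1) : ℤ) = (Nat.fib (K+1) : ℤ)^2 + (Nat.fib K : ℤ)^2 := by
    rw [Nat.fib_two_mul_add_one]
    push_cast
    ring
  have hxi0 : (0 : ℤ) ≤ (if Odd K then (1:ℤ) else 0) := by positivity
  have hxi1 : (if Odd K then (1:ℤ) else 0) ≤ 1 := by split <;> norm_num
  have ha2 : (1:ℤ) ≤ (Nat.fib K : ℤ)^2 := by nlinarith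
  -- step 1: fib (2K) < fib n
  have hK2ab : (0:ℤ) < ((K:ℤ) - 2) * ((Nat.fib K : ℤ) * (Nat.fib (K+1) : ℤ)) :=
    mul_pos (by linarith) hABpos
  have hstep1 : Nat.fib (2 * K) < Nat.fib n := by
    have : (Nat.fib (2 * K) : ℤ) < (Nat.fib n : ℤ) := by
      rw [h2K, hZ]
      nlinarith [hK2ab, hxi0]
    exact_mod_cast this
  have hn2K : 2 * K < n := by
    have := (Nat.fib_lt_fib (by omega : 2 ≤ 2 * K)).mp hstep1
    omega
  obtain ⟨t, rfl⟩ : ∃ t, n = t + 2 * K + 1 := ⟨n - (2 * K + 1), by omega⟩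
  have hsplit : Nat.fib (t + 2 * K + 1) =
      Nat.fib t * Nat.fib (2 * K) + Nat.fib (t + 1) * Nat.fib (2 * K + 1) :=
    Nat.fib_add t (2 * K)
  have hfnZ : (Nat.fib (t + 2*K+1) : ℤ) =
      (Nat.fib t : ℤ) * ((Nat.fib K : ℤ) * (2 * (Nat.fib (K+1) : ℤ) - Nat.fib K)) +
      (Nat.fib (t+1) : ℤ) * ((Nat.fib (K+1) : ℤ)^2 + (Nat.fib K : ℤ)^2) := by
    rw [hsplit]
    push_cast [h2K, h2K1]
    ring
  -- step : fib (t+1) < K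
  have hft1K : Nat.fib (t + 1) < K := by
    have hub : (Nat.fib (t + 2*K+1) : ℤ) ≤ (K:ℤ) * (Nat.fib K : ℤ) * (Nat.fib (K+1) : ℤ) := by
      rw [hZ]
      linarith [ha2, hxi1]
    have hA : (0:ℤ) ≤ (Nat.fib t : ℤ) := by positivity
    have hB : (0:ℤ) ≤ (Nat.fib K : ℤ) * (2 * (Nat.fib (K+1) : ℤ) - Nat.fib K) :=
      mul_nonneg (by linarith) (by linarith)
    have h1 : (Nat.fib K : ℤ) * (Nat.fib (K+1) : ℤ) <
        (Nat.fib (K+1) : ℤ)^2 + (Nat.fib K : ℤ)^2 := by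
      nlinarith [sq_nonneg ((Nat.fib K : ℤ) - (Nat.fib (K+1) : ℤ)), hABpos]
    have h2 : (K:ℤ) * ((Nat.fib K : ℤ) * (Nat.fib (K+1) : ℤ)) <
        (K:ℤ) * ((Nat.fib (K+1) : ℤ)^2 + (Nat.fib K : ℤ)^2) :=
      mul_lt_mul_of_pos_left h1 (by linarith)
    have hZineq : (Nat.fib (t+1) : ℤ) * ((Nat.fib (K+1) : ℤ)^2 + (Nat.fib K : ℤ)^2) <
        (K:ℤ) * ((Nat.fib (K+1) : ℤ)^2 + (Nat.fib K : ℤ)^2) := by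
      nlinarith [mul_nonneg hA hB, hfnZ, hub, h2]
    have hpos : (0:ℤ) < (Nat.fib (K+1) : ℤ)^2 + (Nat.fib K : ℤ)^2 := by positivity
    have := lt_of_mul_lt_mul_right hZineq (le_of_lt hpos)
    exact_mod_cast this
  have hftle : Nat.fib t ≤ Nat.fib (t + 1) := Nat.fib_le_fib_succ
  -- full integer equation
  have hE : (K:ℤ) * (Nat.fib K : ℤ) * (Nat.fib (K+1) : ℤ) - (Nat.fib K : ℤ)^2 +
        (if Odd K then (1:ℤ) else 0) =
      (Nat.fib t : ℤ) * ((Nat.fib K : ℤ) * (2 * (Nat.fib (K+1) : ℤ) - Nat.fib K)) +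
      (Nat.fib (t+1) : ℤ) * ((Nat.fib (K+1) : ℤ)^2 + (Nat.fib K : ℤ)^2) := by
    rw [← hfnZ, hZ]
  -- move to ZMod (fib (K+1))
  haveI : NeZero (Nat.fib (K + 1)) := ⟨by omega⟩
  have hmod := congrArg (fun z : ℤ => (z : ZMod (Nat.fib (K + 1)))) hE
  have hcas := congrArg (fun z : ℤ => (z : ZMod (Nat.fib (K + 1)))) (cassini K)
  push_cast at hmod hcas
  rw [ZMod.natCast_self] at hmod hcas
  rcases Nat.even_or_odd K with hKpar | hKpar
  · -- K even
    rw [if_neg (Nat.not_odd_iff_even.mpr hKpar)] at hmod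
    rw [hKpar.neg_one_pow] at hcas
    have key : ((Nat.fib (t+1) + 1 : ℕ) : ZMod (Nat.fib (K+1))) =
        ((Nat.fib t : ℕ) : ZMod (Nat.fib (K+1))) := by
      push_cast
      linear_combination hmod + ((Nat.fib t : ZMod (Nat.fib (K+1))) -
        (Nat.fib (t+1) : ZMod (Nat.fib (K+1))) - 1) * hcas
    rw [ZMod.natCast_eq_natCast_iff] at key
    have h1 : Nat.fib (t+1) + 1 < Nat.fib (K+1) := by omega
    have h2 : Nat.fib t < Nat.fib (K+1) := by omega
    have := key.eq_of_lt_of_lt h1 h2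
    omega
  · -- K odd
    rw [if_pos hKpar] at hmod
    rw [hKpar.neg_one_pow] at hcas
    have key : ((Nat.fib (t+1) : ℕ) : ZMod (Nat.fib (K+1))) =
        ((Nat.fib t : ℕ) : ZMod (Nat.fib (K+1))) := by
      linear_combination -hmod + ((Nat.fib (t+1) : ZMod (Nat.fib (K+1))) -
        (Nat.fib t : ZMod (Nat.fib (K+1))) + 1) * hcas
    rw [ZMod.natCast_eq_natCast_iff] at key
    have h1 : Nat.fib (t+1) < Nat.fib (K+1) := by omega
    have h2 : Nat.fib t < Nat.fib (K+1) := by omega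
    have heq : Nat.fib (t+1) = Nat.fib t := key.eq_of_lt_of_lt h1 h2
    have ht1 : t = 1 := by
      match t with
      | 0 => simp [Nat.fib] at heq
      | 1 => rfl
      | (s+2) =>
          have := Nat.fib_lt_fib_succ (show 2 ≤ s + 2 by omega)
          omega
    subst ht1
    have hfn : Nat.fib (1 + 2*K + 1) = Nat.fib (K+1) * (2 * Nat.fib K + Nat.fib (K+1)) := by
      rw [show 1 + 2*K + 1 = 2*K + 2 by ring, Nat.fib_two_mul_add_two]
    rw [hfn] at hZ
    rw [if_pos hKpar] at hZ
    push_cast at hZ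
    -- hZ : K a b - a^2 + 1 = b * (2a + b); contradiction
    have e1 : (Nat.fib K : ℤ) * (Nat.fib K : ℤ) < (Nat.fib K : ℤ) * (Nat.fib (K+1) : ℤ) :=
      mul_lt_mul_of_pos_left hZab (by linarith)
    have e2 : (Nat.fib (K+1) : ℤ) * (Nat.fib (K+1) : ℤ) <
        (2 * (Nat.fib K : ℤ)) * (Nat.fib (K+1) : ℤ) :=
      mul_lt_mul_of_pos_right hZb2a hb0
    have e3 : 3 * ((Nat.fib K : ℤ) * (Nat.fib (K+1) : ℤ)) ≤
        ((K:ℤ) - 2) * ((Nat.fib K : ℤ) * (Nat.fib (K+1) : ℤ)) :=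
      mul_le_mul_of_nonneg_right (by linarith) (le_of_lt hABpos)
    nlinarith [hZ, e1, e2, e3]

theorem sum_j_fib_sq_eq_fib (k n : ℕ) (hk : 0 < k) (hn : 0 < n) :
    (∑ j ∈ Finset.Icc 1 k, j * Nat.fib j ^ 2) = Nat.fib n ↔
      (k, n) = (1, 1) ∨ (k, n) = (1, 2) ∨ (k, n) = (2, 4) := by
  constructor
  · intro h
    match k, hk with
    | 1, _ =>
        have h1 : Nat.fib n = 1 := by rw [← h]; decide
        have hn3 : n < 3 := by
          by_contra hc
          have h2 := Nat.fib_mono (show 3 ≤ n by omega)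
          have h3 : Nat.fib 3 = 2 := by decide
          omega
        interval_cases n
        · left; rfl
        · right; left; rfl
    | 2, _ =>
        have h1 : Nat.fib n = 3 := by rw [← h]; decide
        have hn5 : n < 5 := by
          by_contra hc
          have h2 := Nat.fib_mono (show 5 ≤ n by omega)
          have h3 : Nat.fib 5 = 5 := by decide
          omega
        interval_cases n <;> first
          | (right; right; rfl)
          | (exfalso; revert h1; decide)
    | 3, _ =>
        exfalso
        have h1 : Nat.fib n = 15 := by rw [← h]; decide
        rcases le_or_gt n 7 with hc | hc
        · have h2 := Nat.fib_mono hc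
          have h3 : Nat.fib 7 = 13 := by decide
          omega
        · have h2 := Nat.fib_mono (show 8 ≤ n by omega)
          have h3 : Nat.fib 8 = 21 := by decide
          omega
    | 4, _ =>
        exfalso
        have h1 : Nat.fib n = 51 := by rw [← h]; decide
        rcases le_or_gt n 9 with hc | hc
        · have h2 := Nat.fib_mono hc
          have h3 : Nat.fib 9 = 34 := by decide
          omega
        · have h2 := Nat.fib_mono (show 10 ≤ n by omega)
          have h3 : Nat.fib 10 = 55 := by decide
          omega
    | (m + 5), _ =>
        exact absurd h (fun hh => main_case (m + 5) n (by omega) hh)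
  · rintro (h | h | h) <;>
      · simp only [Prod.mk.injEq] at h
        obtain ⟨rfl, rfl⟩ := h
        decide
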